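/- Fix λ > 0, Ω > 0, p > 0 and let Q : ℝ → ℝ be defined by Q(x) = (Ω(p+1)/λ)^{1/(2p)}·sech^{1/p}(√Ω·p·x). Then there exist constants C > 0 and h₀ > 0 such that for every h ∈ (0, h₀), | h·Σ_{n∈ℤ} Q(hn)⁵·Q(h(n+1)) − ∫_ℝ Q(x)⁶ dx | ≤ C·h. -/

import Mathlib

open Real MeasureTheory Set

/-- The continuous NLS solitary-wave profile
`Q(x) = (Ω(p+1)/λ)^{1/(2p)} sech^{1/p}(√Ω p x)`. -/
noncomputable def solitonQ (lam Ω p : ℝ) (x : ℝ) : ℝ :=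
  (Ω * (p + 1) / lam) ^ (1 / (2 * p))
    * (1 / Real.cosh (Real.sqrt Ω * p * x)) ^ (1 / p)

variable {lam Ω p : ℝ}

lemma solitonQ_eq (hp : 0 < p) (x : ℝ) :
    solitonQ lam Ω p x = (Ω * (p + 1) / lam) ^ (1 / (2 * p))
      * (Real.cosh (Real.sqrt Ω * p * x)) ^ (-(1 / p)) := by
  rw [solitonQ, one_div (Real.cosh _), Real.inv_rpow (Real.cosh_pos _).le, ← Real.rpow_neg (Real.cosh_pos _).le]

lemma solitonQ_hasDerivAt (hp : 0 < p) (hΩ : 0 < Ω) (x : ℝ) :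
    HasDerivAt (solitonQ lam Ω p)
      ((Ω * (p + 1) / lam) ^ (1 / (2 * p)) *
        ((-(1 / p) * Real.cosh (Real.sqrt Ω * p * x) ^ (-(1 / p) - 1)) *
          (Real.sinh (Real.sqrt Ω * p * x) * (Real.sqrt Ω * p)))) x := by
  have h1 : HasDerivAt (fun x : ℝ => Real.cosh (Real.sqrt Ω * p * x))
      (Real.sinh (Real.sqrt Ω * p * x) * (Real.sqrt Ω * p)) x := by
    simpa [Function.comp_def] using (Real.hasDerivAt_cosh (Real.sqrt Ω * p * x)).comp x
      ((hasDerivAt_id x).const_mul (Real.sqrt Ω * p))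
  have h2 := (Real.hasDerivAt_rpow_const
      (x := Real.cosh (Real.sqrt Ω * p * x)) (p := -(1/p))
      (Or.inl (Real.cosh_pos _).ne')).comp x h1
  have h3 := h2.const_mul ((Ω * (p + 1) / lam) ^ (1 / (2 * p)))
  refine h3.congr_of_eventuallyEq ?_
  filter_upwards with y
  rw [solitonQ_eq hp]
  simp [Function.comp]

lemma solitonQ_nonneg (hlam : 0 < lam) (hΩ : 0 < Ω) (hp : 0 < p) (x : ℝ) :
    0 ≤ solitonQ lam Ω p x := by
  rw [solitonQ]; positivity

lemma solitonQ_le (hlam : 0 < lam) (hΩ : 0 < Ω) (hp : 0 < p) (x : ℝ) :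
    solitonQ lam Ω p x ≤ (Ω * (p + 1) / lam) ^ (1 / (2 * p)) := by
  rw [solitonQ]
  have h1 : (1 / Real.cosh (Real.sqrt Ω * p * x)) ^ (1 / p) ≤ 1 :=
    Real.rpow_le_one (by positivity)
      (by rw [div_le_one (Real.cosh_pos _)]; exact Real.one_le_cosh _) (by positivity)
  have h2 : (0:ℝ) ≤ (Ω * (p + 1) / lam) ^ (1 / (2 * p)) := by positivity
  exact mul_le_of_le_one_right h2 h1

lemma solitonQ_decay (hlam : 0 < lam) (hΩ : 0 < Ω) (hp : 0 < p) (x : ℝ) :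
    solitonQ lam Ω p x ≤ ((Ω * (p + 1) / lam) ^ (1 / (2 * p)) * 2 ^ (1 / p)) *
      Real.exp (-(Real.sqrt Ω * |x|)) := by
  rw [solitonQ]
  set t := Real.sqrt Ω * p * x with ht
  have hcosh : Real.exp |t| / 2 ≤ Real.cosh t := by
    rw [Real.cosh_eq]
    rcases abs_cases t with ⟨he, _⟩ | ⟨he, _⟩ <;> rw [he] <;>
      nlinarith [Real.exp_pos t, Real.exp_pos (-t)]
  have h1 : 1 / Real.cosh t ≤ 2 * Real.exp (-|t|) := by
    have hprod : Real.exp (-|t|) * Real.exp |t| = 1 := by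
      rw [← Real.exp_add]; simp
    rw [div_le_iff₀ (Real.cosh_pos t)]
    nlinarith [hcosh, Real.exp_pos |t|, Real.exp_pos (-|t|)]
  have h2 : (1 / Real.cosh t) ^ (1/p) ≤ (2 * Real.exp (-|t|)) ^ (1/p) :=
    Real.rpow_le_rpow (by positivity) h1 (by positivity)
  have h3 : (2 * Real.exp (-|t|)) ^ (1/p) = 2 ^ (1/p) * Real.exp (-(Real.sqrt Ω * |x|)) := by
    rw [Real.mul_rpow (by norm_num) (Real.exp_pos _).le, ← Real.exp_mul]
    congr 1
    rw [ht]
    rw [abs_mul, abs_of_nonneg (by positivity : (0:ℝ) ≤ Real.sqrt Ω * p), mul_comm]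
    field_simp
  calc (Ω * (p + 1) / lam) ^ (1 / (2 * p)) * (1 / Real.cosh t) ^ (1 / p)
      ≤ (Ω * (p + 1) / lam) ^ (1 / (2 * p)) * (2 ^ (1/p) * Real.exp (-(Real.sqrt Ω * |x|))) := by
        rw [← h3]
        exact mul_le_mul_of_nonneg_left h2 (by positivity)
    _ = _ := by ring

lemma solitonQ_deriv_bound (hlam : 0 < lam) (hΩ : 0 < Ω) (hp : 0 < p) (x : ℝ) :
    |(Ω * (p + 1) / lam) ^ (1 / (2 * p)) *
        ((-(1 / p) * Real.cosh (Real.sqrt Ω * p * x) ^ (-(1 / p) - 1)) *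
          (Real.sinh (Real.sqrt Ω * p * x) * (Real.sqrt Ω * p)))|
      ≤ (Ω * (p + 1) / lam) ^ (1 / (2 * p)) * Real.sqrt Ω := by
  set A := (Ω * (p + 1) / lam) ^ (1 / (2 * p)) with hA
  have hA0 : 0 ≤ A := by positivity
  set t := Real.sqrt Ω * p * x with ht
  have hc := Real.cosh_pos t
  have key : Real.cosh t ^ (-(1 / p) - 1) * |Real.sinh t| ≤ 1 := by
    have e1 : Real.cosh t ^ (-(1 / p) - 1) = Real.cosh t ^ (-(1/p)) * (Real.cosh t)⁻¹ := by
      rw [← Real.rpow_neg_one (Real.cosh t), ← Real.rpow_add hc]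
      congr 1
    have e2 : Real.cosh t ^ (-(1/p)) ≤ 1 :=
      Real.rpow_le_one_of_one_le_of_nonpos (Real.one_le_cosh t) (neg_nonpos.mpr (by positivity))
    have e3 : |Real.sinh t| ≤ Real.cosh t := by
      rw [Real.abs_sinh, ← Real.cosh_abs]
      exact (Real.sinh_lt_cosh _).le
    calc Real.cosh t ^ (-(1 / p) - 1) * |Real.sinh t|
        ≤ Real.cosh t ^ (-(1 / p) - 1) * Real.cosh t := by
          exact mul_le_mul_of_nonneg_left e3 (Real.rpow_nonneg hc.le _)
      _ = Real.cosh t ^ (-(1/p)) := by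
          rw [e1]; field_simp
      _ ≤ 1 := e2
  have hre : (0:ℝ) ≤ Real.sqrt Ω * p := by positivity
  calc |A * ((-(1 / p) * Real.cosh t ^ (-(1 / p) - 1)) * (Real.sinh t * (Real.sqrt Ω * p)))|
      = A * ((1/p) * (Real.sqrt Ω * p)) * (Real.cosh t ^ (-(1 / p) - 1) * |Real.sinh t|) := by
        rw [abs_mul, abs_mul, abs_mul, abs_mul, abs_of_nonneg hA0, abs_neg,
          abs_of_nonneg (by positivity : (0:ℝ) ≤ 1/p),
          abs_of_nonneg (Real.rpow_nonneg hc.le _), abs_of_nonneg hre]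
        ring
    _ = A * Real.sqrt Ω * (Real.cosh t ^ (-(1 / p) - 1) * |Real.sinh t|) := by
        field_simp
    _ ≤ A * Real.sqrt Ω * 1 :=
        mul_le_mul_of_nonneg_left key (by positivity)
    _ = A * Real.sqrt Ω := by ring

lemma solitonQ_lipschitz (hlam : 0 < lam) (hΩ : 0 < Ω) (hp : 0 < p) (x y : ℝ) :
    |solitonQ lam Ω p x - solitonQ lam Ω p y|
      ≤ ((Ω * (p + 1) / lam) ^ (1 / (2 * p)) * Real.sqrt Ω) * |x - y| := by
  set L := (Ω * (p + 1) / lam) ^ (1 / (2 * p)) * Real.sqrt Ω with hL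
  have hL0 : 0 ≤ L := by positivity
  have key : LipschitzOnWith L.toNNReal (solitonQ lam Ω p) univ := by
    apply Convex.lipschitzOnWith_of_nnnorm_hasDerivWithin_le (convex_univ)
      (f' := fun x => (Ω * (p + 1) / lam) ^ (1 / (2 * p)) *
        ((-(1 / p) * Real.cosh (Real.sqrt Ω * p * x) ^ (-(1 / p) - 1)) *
          (Real.sinh (Real.sqrt Ω * p * x) * (Real.sqrt Ω * p))))
      (fun x _ => (solitonQ_hasDerivAt hp hΩ x).hasDerivWithinAt)
    intro x _
    rw [← NNReal.coe_le_coe, coe_nnnorm, Real.coe_toNNReal _ hL0, Real.norm_eq_abs]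
    exact solitonQ_deriv_bound hlam hΩ hp x
  have := key.dist_le_mul x (mem_univ x) y (mem_univ y)
  rwa [Real.dist_eq, Real.dist_eq, Real.coe_toNNReal _ hL0] at this

lemma solitonQ_continuous (hΩ : 0 < Ω) (hp : 0 < p) :
    Continuous (solitonQ lam Ω p) :=
  continuous_iff_continuousAt.mpr fun x => (solitonQ_hasDerivAt hp hΩ x).continuousAt


lemma integrable_exp_neg_abs {c : ℝ} (hc : 0 < c) :
    Integrable (fun x : ℝ => Real.exp (-(c * |x|))) := by
  rw [← integrableOn_univ, ← @Iio_union_Ici _ _ (0 : ℝ), integrableOn_union,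
    integrableOn_Ici_iff_integrableOn_Ioi]
  constructor
  · rw [← (Measure.measurePreserving_neg (volume : Measure ℝ)).integrableOn_comp_preimage
        (Homeomorph.neg ℝ).measurableEmbedding]
    simp only [Function.comp_def, abs_neg, neg_preimage, neg_Iio, neg_zero]
    exact (exp_neg_integrableOn_Ioi 0 hc).congr_fun
      (fun x hx => by rw [abs_of_pos hx]; ring_nf) measurableSet_Ioi
  · exact (exp_neg_integrableOn_Ioi 0 hc).congr_fun
      (fun x hx => by rw [abs_of_pos hx]; ring_nf) measurableSet_Ioi

set_option maxHeartbeats 1000000 in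
lemma riemann_general (f : ℝ → ℝ) (A B L c : ℝ)
    (hA : 0 < A) (hB : 0 < B) (hL : 0 < L) (hc : 0 < c)
    (hnn : ∀ x, 0 ≤ f x) (hbd : ∀ x, f x ≤ A)
    (hdec : ∀ x, f x ≤ B * Real.exp (-(c * |x|)))
    (hlip : ∀ x y, |f x - f y| ≤ L * |x - y|)
    (hcont : Continuous f) (h : ℝ) (hh : 0 < h) (hh1 : c * h ≤ 1) :
    |h * ∑' n : ℤ, f (h * n) ^ 5 * f (h * (n + 1)) - ∫ x : ℝ, f x ^ 6|
      ≤ (24 * A ^ 4 * L * B * Real.exp 1 / c) * h := by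
  have hch : 0 < c * h := mul_pos hc hh
  set r : ℝ := Real.exp (-(c * h)) with hr_def
  have hr0 : 0 < r := Real.exp_pos _
  have hr1 : r < 1 := by
    rw [hr_def, ← Real.exp_zero]
    exact Real.exp_lt_exp.mpr (by linarith)
  set M : ℤ → ℝ := fun n => (B * Real.exp 1) * r ^ n.natAbs with hM_def
  have hM0 : ∀ n, 0 ≤ M n := fun n => by positivity
  -- cell bound
  have hcell : ∀ n : ℤ, ∀ x ∈ Icc (h * (n : ℝ)) (h * ((n : ℝ) + 1)), f x ≤ M n := by
    intro n x hx
    have habs : h * (n.natAbs : ℝ) - h ≤ |x| := by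
      have hcastA : ((n.natAbs : ℝ)) = |(n : ℝ)| := by
        rw [Nat.cast_natAbs]; exact Int.cast_abs
      rcases le_or_gt 0 n with hn | hn
      · have hn' : (0 : ℝ) ≤ (n : ℝ) := by exact_mod_cast hn
        have hcast : ((n.natAbs : ℝ)) = (n : ℝ) := by
          rw [hcastA, abs_of_nonneg hn']
        have hx1 : h * (n : ℝ) ≤ x := hx.1
        have hx0 : 0 ≤ x := le_trans (by nlinarith) hx1
        rw [abs_of_nonneg hx0, hcast]
        nlinarith
      · have hn1 : (n : ℝ) + 1 ≤ 0 := by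
          exact_mod_cast (by omega : n + 1 ≤ 0)
        have hn' : (n : ℝ) ≤ 0 := by linarith
        have hcast : ((n.natAbs : ℝ)) = -(n : ℝ) := by
          rw [hcastA, abs_of_nonpos hn']
        have hxle : x ≤ h * ((n : ℝ) + 1) := hx.2
        have hx0 : x ≤ 0 := le_trans hxle (by nlinarith)
        rw [abs_of_nonpos hx0, hcast]
        nlinarith
    have hrk : r ^ n.natAbs = Real.exp ((n.natAbs : ℝ) * (-(c * h))) := by
      rw [Real.exp_nat_mul]
    calc f x ≤ B * Real.exp (-(c * |x|)) := hdec x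
      _ ≤ B * (Real.exp 1 * r ^ n.natAbs) := by
          apply mul_le_mul_of_nonneg_left _ hB.le
          rw [hrk, ← Real.exp_add]
          apply Real.exp_le_exp.mpr
          have : c * |x| ≥ c * (h * (n.natAbs : ℝ) - h) :=
            mul_le_mul_of_nonneg_left habs hc.le
          nlinarith
      _ = M n := by rw [hM_def]; ring
  -- summability of r ^ |n|
  have hgeo : Summable (fun k : ℕ => r ^ k) := summable_geometric_of_lt_one hr0.le hr1
  have hnab : ∀ n : ℕ, ((-((n : ℤ) + 1)).natAbs) = n + 1 := fun n => by omega
  have hgeo2 : Summable (fun n : ℕ => r ^ ((-((n : ℤ) + 1)).natAbs)) := by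
    have e : (fun n : ℕ => r ^ ((-((n : ℤ) + 1)).natAbs)) = fun n : ℕ => r * r ^ n := by
      funext n; rw [hnab n, pow_succ]; ring
    rw [e]; exact hgeo.mul_left r
  have hrsum : Summable (fun n : ℤ => r ^ n.natAbs) := by
    apply Summable.of_nat_of_neg_add_one
    · simpa using hgeo
    · exact hgeo2
  have hrts : (∑' n : ℤ, r ^ n.natAbs) ≤ 2 / (1 - r) := by
    have e0 := tsum_of_nat_of_neg_add_one (f := fun n : ℤ => r ^ n.natAbs)
        (by simpa using hgeo) hgeo2
    rw [e0]
    have e1 : (∑' n : ℕ, r ^ (n : ℤ).natAbs) = (1 - r)⁻¹ := by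
      simp only [Int.natAbs_natCast]
      exact tsum_geometric_of_lt_one hr0.le hr1
    have e2 : (∑' n : ℕ, r ^ (-((n : ℤ) + 1)).natAbs) ≤ (1 - r)⁻¹ := by
      have : ∀ n : ℕ, r ^ (-((n : ℤ) + 1)).natAbs ≤ r ^ n := by
        intro n
        have : (-((n : ℤ) + 1)).natAbs = n + 1 := by omega
        rw [this, pow_succ]
        nlinarith [pow_nonneg hr0.le n, pow_le_one₀ hr0.le hr1.le (n := n)]
      calc (∑' n : ℕ, r ^ (-((n : ℤ) + 1)).natAbs) ≤ ∑' n : ℕ, r ^ n :=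
            Summable.tsum_le_tsum this (by
              apply Summable.of_nonneg_of_le (fun n => by positivity) this hgeo) hgeo
        _ = (1 - r)⁻¹ := tsum_geometric_of_lt_one hr0.le hr1
    rw [e1]
    have h1r : 0 < 1 - r := by linarith
    calc (1 - r)⁻¹ + (∑' n : ℕ, r ^ (-((n : ℤ) + 1)).natAbs)
        ≤ (1 - r)⁻¹ + (1 - r)⁻¹ := by linarith
      _ = 2 / (1 - r) := by rw [div_eq_mul_inv]; ring
  have hMsum : Summable M := hrsum.mul_left _
  -- integrability of f ^ 6
  have hf6 : Integrable (fun x : ℝ => f x ^ 6) := by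
    apply Integrable.mono' ((integrable_exp_neg_abs hc).const_mul (A ^ 5 * B))
      ((hcont.pow 6).aestronglyMeasurable)
    filter_upwards with x
    rw [Real.norm_eq_abs, Pi.pow_apply, abs_of_nonneg (pow_nonneg (hnn x) 6)]
    calc f x ^ 6 = f x ^ 5 * f x := by ring
      _ ≤ A ^ 5 * (B * Real.exp (-(c * |x|))) := by
          apply mul_le_mul (pow_le_pow_left₀ (hnn x) (hbd x) 5) (hdec x) (hnn x) (by positivity)
      _ = A ^ 5 * B * Real.exp (-(c * |x|)) := by ring
  -- partition of ℝ into cells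
  have hUnion : (⋃ n : ℤ, Ioc (h * (n : ℝ)) (h * ((n : ℝ) + 1))) = univ := by
    ext x
    simp only [mem_iUnion, mem_univ, iff_true, mem_Ioc]
    refine ⟨⌈x / h⌉ - 1, ?_, ?_⟩
    · push_cast
      have := Int.ceil_lt_add_one (x / h)
      have h2 : (⌈x / h⌉ : ℝ) - 1 < x / h := by linarith
      calc h * ((⌈x / h⌉ : ℝ) - 1) < h * (x / h) := by
            exact mul_lt_mul_of_pos_left h2 hh
        _ = x := by field_simp
    · push_cast
      have := Int.le_ceil (x / h)
      calc x = h * (x / h) := by field_simp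
        _ ≤ h * (⌈x / h⌉ : ℝ) := mul_le_mul_of_nonneg_left this hh.le
        _ = h * ((⌈x / h⌉ : ℝ) - 1 + 1) := by ring
  have hdisj : Pairwise (Function.onFun Disjoint fun n : ℤ => Ioc (h * (n : ℝ)) (h * ((n : ℝ) + 1))) := by
    intro m n hmn
    simp only [Function.onFun]
    rw [Set.Ioc_disjoint_Ioc]
    rcases lt_or_gt_of_ne hmn with hlt | hlt
    · have : (m : ℝ) + 1 ≤ (n : ℝ) := by exact_mod_cast hlt
      apply le_trans (min_le_left _ _)
      apply le_trans _ (le_max_right _ _)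
      nlinarith
    · have : (n : ℝ) + 1 ≤ (m : ℝ) := by exact_mod_cast hlt
      apply le_trans (min_le_right _ _)
      apply le_trans _ (le_max_left _ _)
      nlinarith
  have hHasSum : HasSum (fun n : ℤ => ∫ x in Ioc (h * (n : ℝ)) (h * ((n : ℝ) + 1)), f x ^ 6)
      (∫ x : ℝ, f x ^ 6) := by
    have := hasSum_integral_iUnion (μ := volume)
      (f := fun x : ℝ => f x ^ 6)
      (s := fun n : ℤ => Ioc (h * (n : ℝ)) (h * ((n : ℝ) + 1)))
      (fun n => measurableSet_Ioc) hdisj (by rw [hUnion]; exact hf6.integrableOn)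
    rwa [hUnion, setIntegral_univ] at this
  -- the summand
  set a : ℤ → ℝ := fun n => f (h * (n : ℝ)) ^ 5 * f (h * ((n : ℝ) + 1)) with ha_def
  have ha_nn : ∀ n, 0 ≤ a n := fun n => mul_nonneg (pow_nonneg (hnn _) 5) (hnn _)
  have ha_le : ∀ n, a n ≤ A ^ 5 * M n := by
    intro n
    have h1 : f (h * (n : ℝ)) ^ 5 ≤ A ^ 5 := pow_le_pow_left₀ (hnn _) (hbd _) 5
    have h2 : f (h * ((n : ℝ) + 1)) ≤ M n := hcell n _ ⟨by nlinarith, le_refl _⟩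
    exact mul_le_mul h1 h2 (hnn _) (by positivity)
  have hasum : Summable a := Summable.of_nonneg_of_le ha_nn ha_le (hMsum.mul_left _)
  -- per-cell estimate
  have hTbound : ∀ n : ℤ,
      |h * a n - ∫ x in Ioc (h * (n : ℝ)) (h * ((n : ℝ) + 1)), f x ^ 6|
        ≤ (6 * A ^ 4 * L * h ^ 2) * M n := by
    intro n
    have hmeas : volume (Ioc (h * (n : ℝ)) (h * ((n : ℝ) + 1))) = ENNReal.ofReal h := by
      rw [Real.volume_Ioc]
      congr 1
      ring
    have hlt : volume (Ioc (h * (n : ℝ)) (h * ((n : ℝ) + 1))) < ⊤ := by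
      rw [hmeas]; exact ENNReal.ofReal_lt_top
    have hconst : ∫ _x in Ioc (h * (n : ℝ)) (h * ((n : ℝ) + 1)), a n = h * a n := by
      rw [setIntegral_const, measureReal_def, hmeas, ENNReal.toReal_ofReal hh.le, smul_eq_mul]
    have hptwise : ∀ x ∈ Ioc (h * (n : ℝ)) (h * ((n : ℝ) + 1)),
        ‖a n - f x ^ 6‖ ≤ 6 * A ^ 4 * L * h * M n := by
      intro x hx
      have hxI : x ∈ Icc (h * (n : ℝ)) (h * ((n : ℝ) + 1)) := Ioc_subset_Icc_self hx
      have hq0 : 0 ≤ f x := hnn _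
      have hqA : f x ≤ A := hbd _
      have ha10 : 0 ≤ f (h * (n : ℝ)) := hnn _
      have ha1A : f (h * (n : ℝ)) ≤ A := hbd _
      have hqM : f x ≤ M n := hcell n x hxI
      have ha1M : f (h * (n : ℝ)) ≤ M n := hcell n _ ⟨le_refl _, by nlinarith⟩
      have b1 : |f (h * ((n : ℝ) + 1)) - f x| ≤ L * h := by
        calc |f (h * ((n : ℝ) + 1)) - f x| ≤ L * |h * ((n : ℝ) + 1) - x| := hlip _ _
          _ ≤ L * h := by
            apply mul_le_mul_of_nonneg_left _ hL.le
            rw [abs_of_nonneg (by linarith [hx.2] : (0:ℝ) ≤ h * ((n : ℝ) + 1) - x)]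
            have := hx.1
            linarith
      have b2 : |f (h * (n : ℝ)) - f x| ≤ L * h := by
        calc |f (h * (n : ℝ)) - f x| ≤ L * |h * (n : ℝ) - x| := hlip _ _
          _ ≤ L * h := by
            apply mul_le_mul_of_nonneg_left _ hL.le
            rw [abs_of_nonpos (by linarith [hx.1.le] : h * (n : ℝ) - x ≤ 0)]
            have := hx.2
            linarith
      have b5 : |f (h * (n : ℝ)) ^ 5 - f x ^ 5| ≤ 5 * A ^ 4 * (L * h) := by
        have hfac : f (h * (n : ℝ)) ^ 5 - f x ^ 5
            = (f (h * (n : ℝ)) - f x) * (f (h * (n : ℝ))^4 + f (h * (n : ℝ))^3 * f x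
              + f (h * (n : ℝ))^2 * f x^2 + f (h * (n : ℝ)) * f x^3 + f x^4) := by ring
        have hS : |f (h * (n : ℝ))^4 + f (h * (n : ℝ))^3 * f x
              + f (h * (n : ℝ))^2 * f x^2 + f (h * (n : ℝ)) * f x^3 + f x^4| ≤ 5 * A ^ 4 := by
          rw [abs_of_nonneg (by positivity)]
          nlinarith [pow_le_pow_left₀ ha10 ha1A 4, pow_le_pow_left₀ hq0 hqA 4,
            mul_le_mul (pow_le_pow_left₀ ha10 ha1A 3) hqA hq0 (by positivity),
            mul_le_mul (pow_le_pow_left₀ ha10 ha1A 2)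
              (pow_le_pow_left₀ hq0 hqA 2) (by positivity) (by positivity),
            mul_le_mul ha1A (pow_le_pow_left₀ hq0 hqA 3) (by positivity) hA.le]
        calc |f (h * (n : ℝ)) ^ 5 - f x ^ 5|
            = |f (h * (n : ℝ)) - f x| * |f (h * (n : ℝ))^4 + f (h * (n : ℝ))^3 * f x
              + f (h * (n : ℝ))^2 * f x^2 + f (h * (n : ℝ)) * f x^3 + f x^4| := by
              rw [hfac, abs_mul]
          _ ≤ (L * h) * (5 * A ^ 4) := mul_le_mul b2 hS (abs_nonneg _) (by positivity)
          _ = 5 * A ^ 4 * (L * h) := by ring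
      have ha15 : f (h * (n : ℝ)) ^ 5 ≤ A ^ 4 * M n := by
        calc f (h * (n : ℝ)) ^ 5 = f (h * (n : ℝ)) ^ 4 * f (h * (n : ℝ)) := by ring
          _ ≤ A ^ 4 * M n :=
            mul_le_mul (pow_le_pow_left₀ ha10 ha1A 4) ha1M ha10 (by positivity)
      calc ‖a n - f x ^ 6‖
          = |f (h * (n : ℝ)) ^ 5 * (f (h * ((n : ℝ) + 1)) - f x)
            + (f (h * (n : ℝ)) ^ 5 - f x ^ 5) * f x| := by
            rw [Real.norm_eq_abs, ha_def]
            congr 1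
            ring
        _ ≤ |f (h * (n : ℝ)) ^ 5 * (f (h * ((n : ℝ) + 1)) - f x)|
            + |(f (h * (n : ℝ)) ^ 5 - f x ^ 5) * f x| := abs_add_le _ _
        _ = f (h * (n : ℝ)) ^ 5 * |f (h * ((n : ℝ) + 1)) - f x|
            + |f (h * (n : ℝ)) ^ 5 - f x ^ 5| * f x := by
            rw [abs_mul, abs_mul, abs_of_nonneg (by positivity : (0:ℝ) ≤ f (h * (n : ℝ)) ^ 5),
              abs_of_nonneg hq0]
        _ ≤ (A ^ 4 * M n) * (L * h) + (5 * A ^ 4 * (L * h)) * M n := by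
            apply add_le_add
            · exact mul_le_mul ha15 b1 (abs_nonneg _) (by positivity)
            · exact mul_le_mul b5 hqM hq0 (by positivity)
        _ = 6 * A ^ 4 * L * h * M n := by ring
    calc |h * a n - ∫ x in Ioc (h * (n : ℝ)) (h * ((n : ℝ) + 1)), f x ^ 6|
        = ‖∫ x in Ioc (h * (n : ℝ)) (h * ((n : ℝ) + 1)), (a n - f x ^ 6)‖ := by
          rw [integral_sub (show IntegrableOn (fun _ : ℝ => a n) (Ioc (h * (n : ℝ)) (h * ((n : ℝ) + 1))) volume from integrableOn_const hlt.ne) hf6.integrableOn, hconst,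
            Real.norm_eq_abs]
      _ ≤ (6 * A ^ 4 * L * h * M n)
            * (volume (Ioc (h * (n : ℝ)) (h * ((n : ℝ) + 1)))).toReal :=
          norm_setIntegral_le_of_norm_le_const hlt hptwise
      _ = (6 * A ^ 4 * L * h ^ 2) * M n := by
          rw [hmeas, ENNReal.toReal_ofReal hh.le]; ring
  -- assembling
  have hTsum : Summable (fun n : ℤ => h * a n) := hasum.mul_left h
  have hIsum : Summable (fun n : ℤ => ∫ x in Ioc (h * (n : ℝ)) (h * ((n : ℝ) + 1)), f x ^ 6) :=
    hHasSum.summable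
  have hsplit : h * (∑' n : ℤ, a n) - ∫ x : ℝ, f x ^ 6
      = ∑' n : ℤ, (h * a n - ∫ x in Ioc (h * (n : ℝ)) (h * ((n : ℝ) + 1)), f x ^ 6) := by
    rw [← hHasSum.tsum_eq, ← tsum_mul_left, ← Summable.tsum_sub hTsum hIsum]
  have habs_sum : Summable (fun n : ℤ =>
      ‖h * a n - ∫ x in Ioc (h * (n : ℝ)) (h * ((n : ℝ) + 1)), f x ^ 6‖) :=
    Summable.of_nonneg_of_le (fun n => norm_nonneg _)
      (fun n => by simpa [Real.norm_eq_abs] using hTbound n) (hMsum.mul_left _)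
  have step1 : |h * (∑' n : ℤ, a n) - ∫ x : ℝ, f x ^ 6|
      ≤ ∑' n : ℤ, ((6 * A ^ 4 * L * h ^ 2) * M n) := by
    rw [hsplit, ← Real.norm_eq_abs]
    refine le_trans (norm_tsum_le_tsum_norm habs_sum) ?_
    exact Summable.tsum_le_tsum (fun n => by simpa [Real.norm_eq_abs] using hTbound n)
      habs_sum (hMsum.mul_left _)
  have hMts : (∑' n : ℤ, ((6 * A ^ 4 * L * h ^ 2) * M n))
      = (6 * A ^ 4 * L * h ^ 2) * ((B * Real.exp 1) * ∑' n : ℤ, r ^ n.natAbs) := by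
    rw [tsum_mul_left, hM_def, tsum_mul_left]
  have h1r : c * h / 2 ≤ 1 - r := by
    have hy := Real.add_one_le_exp (c * h)
    have hyi : r * Real.exp (c * h) = 1 := by rw [hr_def, ← Real.exp_add]; simp
    have hA1 : r * (1 + c * h) ≤ 1 := by
      nlinarith [Real.exp_pos (c * h)]
    nlinarith [mul_nonneg hch.le (sub_nonneg.2 hh1)]
  have hs0 : 0 < 1 - r := by linarith
  have hfrac : 2 / (1 - r) ≤ 4 / (c * h) := by
    have e1 : 2 / (1 - r) ≤ 2 / (c * h / 2) :=
      div_le_div_of_nonneg_left (by norm_num) (by positivity) h1r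
    have e2 : 2 / (c * h / 2) = 4 / (c * h) := by
      field_simp
      ring
    linarith [e1, e2.le, e2.ge]
  calc |h * (∑' n : ℤ, a n) - ∫ x : ℝ, f x ^ 6|
      ≤ ∑' n : ℤ, ((6 * A ^ 4 * L * h ^ 2) * M n) := step1
    _ = (6 * A ^ 4 * L * h ^ 2) * ((B * Real.exp 1) * ∑' n : ℤ, r ^ n.natAbs) := hMts
    _ ≤ (6 * A ^ 4 * L * h ^ 2) * ((B * Real.exp 1) * (2 / (1 - r))) := by
        apply mul_le_mul_of_nonneg_left
          (mul_le_mul_of_nonneg_left hrts (by positivity)) (by positivity)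
    _ ≤ (6 * A ^ 4 * L * h ^ 2) * ((B * Real.exp 1) * (4 / (c * h))) := by
        apply mul_le_mul_of_nonneg_left
          (mul_le_mul_of_nonneg_left hfrac (by positivity)) (by positivity)
    _ = (24 * A ^ 4 * L * B * Real.exp 1 / c) * h := by
        field_simp
        ring


/-- **Riemann-sum estimate**: for small `h`,
`|h Σₙ Q(hn)⁵ Q(h(n+1)) − ∫_ℝ Q⁶| ≤ C h`. -/
theorem soliton_riemann_sum_estimate
    (lam Ω p : ℝ) (hlam : 0 < lam) (hΩ : 0 < Ω) (hp : 0 < p) :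
    ∃ C > (0 : ℝ), ∃ h₀ > (0 : ℝ), ∀ h : ℝ, 0 < h → h < h₀ →
      |h * ∑' n : ℤ, solitonQ lam Ω p (h * n) ^ 5 * solitonQ lam Ω p (h * (n + 1))
          - ∫ x : ℝ, solitonQ lam Ω p x ^ 6|
        ≤ C * h := by
  set A : ℝ := (Ω * (p + 1) / lam) ^ (1 / (2 * p)) with hA_def
  have hA : 0 < A := Real.rpow_pos_of_pos (by positivity) _
  set c : ℝ := Real.sqrt Ω with hc_def
  have hc : 0 < c := Real.sqrt_pos.mpr hΩ
  set B : ℝ := A * 2 ^ (1 / p) with hB_def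
  have hB : 0 < B := by
    have : (0:ℝ) < (2:ℝ) ^ (1 / p) := Real.rpow_pos_of_pos (by norm_num) _
    positivity
  set L : ℝ := A * c with hL_def
  have hL : 0 < L := mul_pos hA hc
  refine ⟨24 * A ^ 4 * L * B * Real.exp 1 / c, by positivity, 1 / c, by positivity, ?_⟩
  intro h hh hh0
  have hch : c * h ≤ 1 := by
    have : c * h < c * (1 / c) := mul_lt_mul_of_pos_left hh0 hc
    rw [mul_one_div, div_self hc.ne'] at this
    exact this.le
  exact riemann_general (solitonQ lam Ω p) A B L c hA hB hL hc
    (solitonQ_nonneg hlam hΩ hp) (solitonQ_le hlam hΩ hp)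
    (solitonQ_decay hlam hΩ hp) (solitonQ_lipschitz hlam hΩ hp)
    (solitonQ_continuous hΩ hp) h hh hch
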